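/- Let d ≥ 1 and r = (r_0,…,r_{d-1}) ∈ ℝ^d. If r ∈ D_d, i.e., for every z ∈ ℤ^d the orbit (τ_r^k(z))_{k≥0} is ultimately periodic, then every complex root of χ_r(X) = X^d + r_{d-1}X^{d-1} + ⋯ + r_0 has modulus at most 1 (equivalently, r lies in the closure of the Schur–Cohn region E_d). -/

import Mathlib

open Polynomial

/-- The shift radix system `τ_r : ℤ^d → ℤ^d`. -/
noncomputable def srsMap (d : ℕ) (r : Fin d → ℝ) (z : Fin d → ℤ) : Fin d → ℤ :=
  fun i =>
    if h : (i : ℕ) + 1 < d then z ⟨(i : ℕ) + 1, h⟩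
    else -⌊∑ j, r j * (z j : ℝ)⌋

/-- `D_d ⊆ closure(E_d)`: if every orbit of `τ_r` is ultimately periodic,
then every complex root of `χ_r(X) = X^d + r_{d-1}X^{d-1} + ⋯ + r_0` has modulus `≤ 1`. -/
theorem Dd_subset_closure_schurCohn (d : ℕ) (hd : 1 ≤ d) (r : Fin d → ℝ)
    (hper : ∀ z : Fin d → ℤ,
      ∃ k l : ℕ, 1 ≤ l ∧ (srsMap d r)^[k + l] z = (srsMap d r)^[k] z) :
    ∀ μ : ℂ,
      (X ^ d + ∑ i : Fin d, C ((r i : ℂ)) * X ^ (i : ℕ)).IsRoot μ → ‖μ‖ ≤ 1 := by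
  intro μ hroot
  by_contra hμ
  push_neg at hμ
  obtain ⟨e, rfl⟩ : ∃ e, d = e + 1 := ⟨d - 1, (Nat.succ_pred_eq_of_pos hd).symm⟩
  -- the extended coefficient sequence of χ_r
  set c : ℕ → ℂ := fun k => if h : k < e + 1 then (r ⟨k, h⟩ : ℂ) else 1 with hc
  -- left eigenvector of the companion matrix for eigenvalue μ
  set u : Fin (e + 1) → ℂ :=
    fun j => ∑ k ∈ Finset.Icc ((j : ℕ) + 1) (e + 1), c k * μ ^ (k - ((j : ℕ) + 1)) with hu
  set f : (Fin (e + 1) → ℤ) → ℂ := fun z => ∑ j, u j * (z j : ℂ) with hf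
  -- the root identity
  have hroot' : μ ^ (e + 1) + ∑ i : Fin (e + 1), (r i : ℂ) * μ ^ (i : ℕ) = 0 := by
    have h := hroot
    simp only [IsRoot.def, eval_add, eval_pow, eval_X, eval_finset_sum, eval_mul, eval_C] at h
    exact h
  have hsum0 : ∑ k ∈ Finset.range (e + 2), c k * μ ^ k = 0 := by
    rw [Finset.sum_range_succ]
    have h1 : ∑ k ∈ Finset.range (e + 1), c k * μ ^ k
        = ∑ i : Fin (e + 1), (r i : ℂ) * μ ^ (i : ℕ) := by
      rw [← Fin.sum_univ_eq_sum_range (fun k => c k * μ ^ k)]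
      refine Finset.sum_congr rfl fun i _ => ?_
      simp [hc, i.isLt]
      intro h; exact absurd i.isLt (by omega)
    have h2 : c (e + 1) = 1 := by simp [hc]
    rw [h1, h2, one_mul, add_comm]
    exact hroot'
  -- the recurrence for u
  have hrec : ∀ a : ℕ, a + 1 ≤ e + 1 →
      ∑ k ∈ Finset.Icc (a + 1) (e + 1), c k * μ ^ (k - (a + 1))
        = c (a + 1) + μ * ∑ k ∈ Finset.Icc (a + 2) (e + 1), c k * μ ^ (k - (a + 2)) := by
    intro a ha
    have hins : Finset.Icc (a + 1) (e + 1) = insert (a + 1) (Finset.Icc (a + 2) (e + 1)) := by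
      ext x; simp only [Finset.mem_Icc, Finset.mem_insert]; omega
    rw [hins, Finset.sum_insert (by simp)]
    congr 1
    · simp
    · rw [Finset.mul_sum]
      refine Finset.sum_congr rfl fun k hk => ?_
      simp only [Finset.mem_Icc] at hk
      rw [show k - (a + 1) = (k - (a + 2)) + 1 from by omega, pow_succ]
      ring
  have hu_last : u (Fin.last e) = 1 := by
    simp [hu, hc]
  have hu0 : μ * u 0 = -c 0 := by
    have h1 : μ * u 0 = ∑ k ∈ Finset.Icc 1 (e + 1), c k * μ ^ k := by
      have h0 : u 0 = ∑ k ∈ Finset.Icc 1 (e + 1), c k * μ ^ (k - 1) := by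
        simp [hu]
      rw [h0, Finset.mul_sum]
      refine Finset.sum_congr rfl fun k hk => ?_
      simp only [Finset.mem_Icc] at hk
      have hk1 : (k - 1) + 1 = k := by omega
      calc μ * (c k * μ ^ (k - 1)) = c k * (μ ^ (k - 1) * μ) := by ring
        _ = c k * μ ^ k := by rw [← pow_succ, hk1]
    have h2 : Finset.range (e + 2) = insert 0 (Finset.Icc 1 (e + 1)) := by
      ext x; simp only [Finset.mem_range, Finset.mem_Icc, Finset.mem_insert]; omega
    rw [h2, Finset.sum_insert (by simp)] at hsum0
    simp only [pow_zero, mul_one] at hsum0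
    rw [h1]; linear_combination hsum0
  have hu_step : ∀ j : Fin e, u (Fin.castSucc j) = c ((j : ℕ) + 1) + μ * u (Fin.succ j) := by
    intro j
    have := hrec (j : ℕ) (by omega)
    simpa [hu, Fin.coe_castSucc, Fin.val_succ] using this
  -- the key functional equation
  have hkey : ∀ z : Fin (e + 1) → ℤ,
      f (srsMap (e + 1) r z)
        = μ * f z + ((Int.fract (∑ j, r j * (z j : ℝ)) : ℝ) : ℂ) := by
    intro z
    set S : ℝ := ∑ j, r j * (z j : ℝ) with hS
    have hτ : ∀ j : Fin e, srsMap (e + 1) r z (Fin.castSucc j) = z (Fin.succ j) := by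
      intro j
      have h : (Fin.castSucc j : ℕ) + 1 < e + 1 := by
        simpa using j.isLt
      simp only [srsMap, dif_pos h]
      congr 1
    have hτlast : srsMap (e + 1) r z (Fin.last e) = -⌊S⌋ := by
      simp [srsMap, hS]
    have hL : f (srsMap (e + 1) r z)
        = ∑ j : Fin e, u (Fin.castSucc j) * (z (Fin.succ j) : ℂ) + ((-⌊S⌋ : ℤ) : ℂ) := by
      simp only [hf]
      rw [Fin.sum_univ_castSucc (f := fun j => u j * (srsMap (e + 1) r z j : ℂ))]
      rw [hτlast, hu_last, one_mul]
      congr 1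
      exact Finset.sum_congr rfl fun j _ => by rw [hτ j]
    have hR : μ * f z = -c 0 * (z 0 : ℂ)
        + (∑ j : Fin e, u (Fin.castSucc j) * (z (Fin.succ j) : ℂ)
          - ∑ j : Fin e, c ((j : ℕ) + 1) * (z (Fin.succ j) : ℂ)) := by
      simp only [hf]
      rw [Finset.mul_sum]
      rw [Fin.sum_univ_succ (f := fun j => μ * (u j * (z j : ℂ)))]
      rw [show μ * (u 0 * (z 0 : ℂ)) = (μ * u 0) * (z 0 : ℂ) from by ring, hu0]
      congr 1
      rw [← Finset.sum_sub_distrib]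
      refine Finset.sum_congr rfl fun j _ => ?_
      rw [hu_step j]
      ring
    have hcz : (c 0) * (z 0 : ℂ) + ∑ j : Fin e, c ((j : ℕ) + 1) * (z (Fin.succ j) : ℂ)
        = (S : ℂ) := by
      rw [hS]
      push_cast
      rw [Fin.sum_univ_succ (f := fun j => (r j : ℂ) * (z j : ℂ))]
      refine congrArg₂ (· + ·) ?_ ?_
      · simp [hc]
      · refine Finset.sum_congr rfl fun j _ => ?_
        have hj : (j : ℕ) + 1 < e + 1 := by simpa using j.isLt
        simp only [hc, dif_pos hj]
        congr 1
    have hfract : ((Int.fract S : ℝ) : ℂ) = (S : ℂ) - ((⌊S⌋ : ℤ) : ℂ) := by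
      simp only [Int.fract]
      push_cast
      ring
    rw [hL, hR, hfract, ← hcz]
    push_cast
    ring
  -- growth of |f| along orbits
  set A : ℝ := ‖μ‖ with hA
  have hA1 : 1 < A := hμ
  set B : ℝ := (A - 1)⁻¹ with hB
  have hBpos : 0 < B := inv_pos.mpr (by linarith)
  have hstep : ∀ z : Fin (e + 1) → ℤ, B < ‖f z‖ →
      ‖f z‖ < ‖f (srsMap (e + 1) r z)‖ := by
    intro z hz
    set S : ℝ := ∑ j, r j * (z j : ℝ) with hS
    have hw0 : (0 : ℝ) ≤ Int.fract S := Int.fract_nonneg S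
    have hw1 : Int.fract S < 1 := Int.fract_lt_one S
    have habsw : ‖((Int.fract S : ℝ) : ℂ)‖ = Int.fract S := by
      rw [Complex.norm_of_nonneg hw0]
    have htri : ‖μ * f z‖
        ≤ ‖f (srsMap (e + 1) r z)‖ + ‖((Int.fract S : ℝ) : ℂ)‖ := by
      have h := norm_add_le (f (srsMap (e + 1) r z)) (-((Int.fract S : ℝ) : ℂ))
      have heq : f (srsMap (e + 1) r z) + -((Int.fract S : ℝ) : ℂ) = μ * f z := by
        rw [hkey z]; ring
      rw [heq, norm_neg] at h
      exact h
    rw [norm_mul, habsw, ← hA] at htri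
    have hmul : 1 < (A - 1) * ‖f z‖ := by
      have h1 : (A - 1) * B < (A - 1) * ‖f z‖ :=
        mul_lt_mul_of_pos_left hz (by linarith)
      rw [hB, mul_inv_cancel₀ (by linarith : A - 1 ≠ 0)] at h1
      exact h1
    nlinarith [norm_nonneg (f z)]
  -- the starting point
  set N : ℕ := ⌈B⌉₊ + 1 with hN
  set z₀ : Fin (e + 1) → ℤ := fun j => if j = Fin.last e then (N : ℤ) else 0 with hz₀
  have hfz₀ : f z₀ = (N : ℂ) := by
    simp only [hf]
    have : ∀ j : Fin (e + 1), u j * ((z₀ j : ℤ) : ℂ)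
        = if j = Fin.last e then u j * (N : ℂ) else 0 := by
      intro j
      by_cases h : j = Fin.last e <;> simp [hz₀, h]
    rw [Finset.sum_congr rfl fun j _ => this j]
    rw [Finset.sum_ite_eq' Finset.univ (Fin.last e) (fun j => u j * (N : ℂ))]
    simp [hu_last]
  have hstart : B < ‖f z₀‖ := by
    rw [hfz₀]
    rw [Complex.norm_natCast]
    calc B ≤ ⌈B⌉₊ := Nat.le_ceil B
    _ < N := by rw [hN]; push_cast; linarith
  -- the orbit values
  set g : ℕ → ℝ := fun n => ‖f ((srsMap (e + 1) r)^[n] z₀)‖ with hg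
  have hgB : ∀ n, B < g n := by
    intro n
    induction n with
    | zero => simpa [hg] using hstart
    | succ n ih =>
      have h := hstep _ ih
      simp only [hg, Function.iterate_succ_apply']
      calc B < g n := ih
      _ < _ := h
  have hmono : StrictMono g := by
    apply strictMono_nat_of_lt_succ
    intro n
    have h := hstep _ (hgB n)
    simp only [hg, Function.iterate_succ_apply']
    exact h
  obtain ⟨k, l, hl, hiter⟩ := hper z₀
  have h1 : g (k + l) = g k := by simp only [hg]; rw [hiter]
  have h2 : g k < g (k + l) := hmono (by omega)
  linarith
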